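/- Let $\{\tau_k\}$ and $\{\beta_k\}$ be positive nonincreasing sequences with $\tau_k = \Theta(k^{-t_1})$ and $\beta_k = \Theta(k^{-t_2})$ for some $t_1 \in (0,1)$ and $t_2 > t_1$. If $\{\phi_k\}$ is a nonnegative real sequence satisfying $\phi_{k+1} \le (1-\tau_k)\phi_k + \beta_k$ for all $k \ge 0$, then $\phi_k = \mathcal{O}(k^{-(t_2-t_1)})$. -/

import Mathlib

open Real Filter

/-- Bernoulli-type inequality for negative exponents: `1 - s*x ≤ (1+x)^(-s)`. -/
lemma bern_neg {x s : ℝ} (hx : 0 ≤ x) (hs : 0 ≤ s) : 1 - s * x ≤ (1 + x) ^ (-s) := by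
  have h1 : (0:ℝ) < 1 + x := by linarith
  rcases le_or_gt (1 - s * x) 0 with h | h
  · exact h.trans (Real.rpow_pos_of_pos h1 _).le
  · have hp : 0 < (1 + x) ^ s := Real.rpow_pos_of_pos h1 s
    have key : (1 - s * x) * (1 + x) ^ s ≤ 1 := by
      have e2 : (1 + x) ^ s = Real.exp (s * Real.log (1 + x)) := by
        rw [Real.rpow_def_of_pos h1, mul_comm]
      have l1 : Real.log (1 - s * x) ≤ -(s * x) := by
        have := Real.log_le_sub_one_of_pos h; linarith
      have l2 : s * Real.log (1 + x) ≤ s * x :=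
        mul_le_mul_of_nonneg_left (by have := Real.log_le_sub_one_of_pos h1; linarith) hs
      calc (1 - s * x) * (1 + x) ^ s
          = Real.exp (Real.log (1 - s * x) + s * Real.log (1 + x)) := by
            rw [Real.exp_add, Real.exp_log h, ← e2]
        _ ≤ Real.exp 0 := Real.exp_le_exp.mpr (by linarith)
        _ = 1 := Real.exp_zero
    have : 1 - s * x ≤ 1 / (1 + x) ^ s := by
      rw [le_div_iff₀ hp]; exact key
    rwa [Real.rpow_neg h1.le, ← one_div]

theorem stmt0 (τ β φ : ℕ → ℝ) (t₁ t₂ : ℝ)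
    (ht₁ : 0 < t₁) (ht₁' : t₁ < 1) (ht₂ : t₁ < t₂)
    (hτpos : ∀ k, 0 < τ k) (hτmono : ∀ k, τ (k + 1) ≤ τ k)
    (hβpos : ∀ k, 0 < β k) (hβmono : ∀ k, β (k + 1) ≤ β k)
    (hτΘ : ∃ c C : ℝ, 0 < c ∧ c ≤ C ∧ ∀ k : ℕ,
      c * ((k : ℝ) + 1) ^ (-t₁) ≤ τ k ∧ τ k ≤ C * ((k : ℝ) + 1) ^ (-t₁))
    (hβΘ : ∃ c C : ℝ, 0 < c ∧ c ≤ C ∧ ∀ k : ℕ,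
      c * ((k : ℝ) + 1) ^ (-t₂) ≤ β k ∧ β k ≤ C * ((k : ℝ) + 1) ^ (-t₂))
    (hφ : ∀ k, 0 ≤ φ k)
    (hrec : ∀ k, φ (k + 1) ≤ (1 - τ k) * φ k + β k) :
    ∃ M : ℝ, ∀ k : ℕ, φ k ≤ M * ((k : ℝ) + 1) ^ (-(t₂ - t₁)) := by
  obtain ⟨c₁, C₁, hc₁, hcC₁, hτb⟩ := hτΘ
  obtain ⟨c₂, C₂, hc₂, hcC₂, hβb⟩ := hβΘ
  have hC₂ : 0 < C₂ := hc₂.trans_le hcC₂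
  set s := t₂ - t₁ with hsdef
  have hspos : 0 < s := by simp only [hsdef]; linarith
  -- find k₀ with s * (k+1)^(t₁-1) ≤ c₁/2 for all k ≥ k₀
  have hlim : Tendsto (fun k : ℕ => s * ((k : ℝ) + 1) ^ (t₁ - 1)) atTop (nhds 0) := by
    have h1 : Tendsto (fun x : ℝ => x ^ (t₁ - 1)) atTop (nhds 0) := by
      have := tendsto_rpow_neg_atTop (y := 1 - t₁) (by linarith)
      simpa [neg_sub] using this
    have h2 : Tendsto (fun k : ℕ => (k : ℝ) + 1) atTop atTop :=
      tendsto_atTop_add_const_right atTop 1 tendsto_natCast_atTop_atTop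
    have := (h1.comp h2).const_mul s
    simpa using this
  obtain ⟨k₀, hk₀⟩ := eventually_atTop.mp
    (hlim.eventually_lt_const (show (0:ℝ) < c₁ / 2 by linarith))
  -- define M
  have hne : (Finset.range (k₀ + 1)).Nonempty := ⟨0, by simp⟩
  set M₀ : ℝ := (Finset.range (k₀ + 1)).sup' hne (fun k => φ k * ((k : ℝ) + 1) ^ s) with hM₀def
  set M : ℝ := max M₀ (max (2 * C₂ / c₁) (C₂ * (2 : ℝ) ^ s)) with hMdef
  have hM1 : 2 * C₂ / c₁ ≤ M := le_max_of_le_right (le_max_left _ _)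
  have hM2 : C₂ * (2 : ℝ) ^ s ≤ M := le_max_of_le_right (le_max_right _ _)
  have hMpos : 0 < M :=
    lt_of_lt_of_le (mul_pos hC₂ (Real.rpow_pos_of_pos two_pos s)) hM2
  refine ⟨M, ?_⟩
  -- base bound for k ≤ k₀
  have hbase : ∀ k ≤ k₀, φ k ≤ M * ((k : ℝ) + 1) ^ (-s) := by
    intro k hk
    have hp : (0:ℝ) < (k : ℝ) + 1 := by positivity
    have h1 : φ k * ((k : ℝ) + 1) ^ s ≤ M := by
      have := Finset.le_sup' (fun k : ℕ => φ k * ((k : ℝ) + 1) ^ s)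
        (Finset.mem_range.mpr (Nat.lt_succ_of_le hk))
      exact le_trans this (le_max_left _ _)
    have h2 : ((k : ℝ) + 1) ^ s * ((k : ℝ) + 1) ^ (-s) = 1 := by
      rw [← Real.rpow_add hp]; simp
    calc φ k = (φ k * ((k : ℝ) + 1) ^ s) * ((k : ℝ) + 1) ^ (-s) := by
          rw [mul_assoc, h2, mul_one]
      _ ≤ M * ((k : ℝ) + 1) ^ (-s) :=
          mul_le_mul_of_nonneg_right h1 (Real.rpow_nonneg hp.le _)
  intro k
  induction k with
  | zero => exact hbase 0 (Nat.zero_le _)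
  | succ k ih =>
    rcases lt_or_ge k k₀ with hk | hk
    · exact hbase (k + 1) hk
    · -- inductive step; set a := k+1
      set a : ℝ := (k : ℝ) + 1 with hadef
      have ha : (0:ℝ) < a := by positivity
      have ha1 : (1:ℝ) ≤ a := by rw [hadef]; linarith [Nat.cast_nonneg (α := ℝ) k]
      have hcast : ((k + 1 : ℕ) : ℝ) + 1 = a + 1 := by push_cast [hadef]; ring
      rw [hcast]
      have haneg : 0 ≤ a ^ (-s) := Real.rpow_nonneg ha.le _
      have hβk : β k ≤ C₂ * a ^ (-t₂) := (hβb k).2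
      have hβt : (0:ℝ) ≤ a ^ (-t₂) := Real.rpow_nonneg ha.le _
      rcases lt_or_ge (1 - τ k) 0 with hτ1 | hτ1
      · -- τ k > 1 : φ (k+1) ≤ β k
        have h1 : φ (k + 1) ≤ β k := by
          have := hrec k
          nlinarith [hφ k, mul_nonpos_of_nonpos_of_nonneg hτ1.le (hφ k)]
        have h2 : a ^ (-t₂) ≤ a ^ (-s) :=
          Real.rpow_le_rpow_of_exponent_le ha1 (by simp [hsdef]; linarith)
        have h3 : a ^ (-s) ≤ (2:ℝ) ^ s * (a + 1) ^ (-s) := by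
          have hle : a + 1 ≤ 2 * a := by linarith
          have h4 : (2 * a) ^ (-s) ≤ (a + 1) ^ (-s) :=
            Real.rpow_le_rpow_of_nonpos (by linarith) hle (by linarith)
          have h5 : (2 * a) ^ (-s) = (2:ℝ) ^ (-s) * a ^ (-s) :=
            Real.mul_rpow (by norm_num) ha.le
          have h6 : (2:ℝ) ^ s * (2:ℝ) ^ (-s) = 1 := by
            rw [← Real.rpow_add two_pos]; simp
          calc a ^ (-s) = (2:ℝ) ^ s * ((2:ℝ) ^ (-s) * a ^ (-s)) := by
                rw [← mul_assoc, h6, one_mul]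
            _ = (2:ℝ) ^ s * (2 * a) ^ (-s) := by rw [h5]
            _ ≤ (2:ℝ) ^ s * (a + 1) ^ (-s) :=
                mul_le_mul_of_nonneg_left h4 (Real.rpow_nonneg (by norm_num) s)
        calc φ (k + 1) ≤ β k := h1
          _ ≤ C₂ * a ^ (-t₂) := hβk
          _ ≤ C₂ * a ^ (-s) := mul_le_mul_of_nonneg_left h2 hC₂.le
          _ ≤ C₂ * ((2:ℝ) ^ s * (a + 1) ^ (-s)) := mul_le_mul_of_nonneg_left h3 hC₂.le
          _ = (C₂ * (2:ℝ) ^ s) * (a + 1) ^ (-s) := by ring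
          _ ≤ M * (a + 1) ^ (-s) :=
              mul_le_mul_of_nonneg_right hM2 (Real.rpow_nonneg (by linarith) _)
      · -- main case: 0 ≤ 1 - τ k
        have hτk : c₁ * a ^ (-t₁) ≤ τ k := (hτb k).1
        have hMa : 0 ≤ M * a ^ (-s) := mul_nonneg hMpos.le haneg
        -- (k+1)-step comparison
        have hsplit : a ^ (-t₁) * a ^ (-s) = a ^ (-t₂) := by
          rw [← Real.rpow_add ha, hsdef]; ring_nf
        have step1 : φ (k + 1) ≤ M * a ^ (-s) - (M * c₁ - C₂) * a ^ (-t₂) := by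
          have h1 := hrec k
          have h2 : (1 - τ k) * φ k ≤ (1 - τ k) * (M * a ^ (-s)) :=
            mul_le_mul_of_nonneg_left ih hτ1
          have h3 : τ k * (M * a ^ (-s)) ≥ (c₁ * a ^ (-t₁)) * (M * a ^ (-s)) :=
            mul_le_mul_of_nonneg_right hτk hMa
          have h4 : (c₁ * a ^ (-t₁)) * (M * a ^ (-s)) = c₁ * M * a ^ (-t₂) := by
            rw [show (c₁ * a ^ (-t₁)) * (M * a ^ (-s)) = c₁ * M * (a ^ (-t₁) * a ^ (-s)) by ring,
              hsplit]
          nlinarith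
        have hMc : M * c₁ / 2 ≤ M * c₁ - C₂ := by
          have : 2 * C₂ / c₁ * c₁ ≤ M * c₁ := mul_le_mul_of_nonneg_right hM1 hc₁.le
          rw [div_mul_cancel₀ _ hc₁.ne'] at this
          linarith
        -- Bernoulli bound: a^(-s) - s * a^(-s-1) ≤ (a+1)^(-s)
        have hbern : a ^ (-s) - s * (a ^ (t₁ - 1) * a ^ (-t₂)) ≤ (a + 1) ^ (-s) := by
          have hx : 0 ≤ 1 / a := by positivity
          have hb := bern_neg hx hspos.le
          have he : (a + 1) ^ (-s) = a ^ (-s) * (1 + 1 / a) ^ (-s) := by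
            rw [← Real.mul_rpow ha.le (by positivity)]
            congr 1
            field_simp
          have hmul : a ^ (-s) * (1 - s * (1 / a)) ≤ a ^ (-s) * (1 + 1 / a) ^ (-s) :=
            mul_le_mul_of_nonneg_left hb haneg
          have hinv : a ^ (-s) * (1 / a) = a ^ (t₁ - 1) * a ^ (-t₂) := by
            rw [one_div, ← Real.rpow_neg_one a, ← Real.rpow_add ha, ← Real.rpow_add ha]
            congr 1
            rw [hsdef]
            ring
          calc a ^ (-s) - s * (a ^ (t₁ - 1) * a ^ (-t₂))
              = a ^ (-s) * (1 - s * (1 / a)) := by rw [← hinv]; ring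
            _ ≤ a ^ (-s) * (1 + 1 / a) ^ (-s) := hmul
            _ = (a + 1) ^ (-s) := he.symm
        have hk₀' : s * a ^ (t₁ - 1) ≤ c₁ / 2 := (hk₀ k hk).le
        have hfin : M * (s * a ^ (t₁ - 1)) * a ^ (-t₂) ≤ M * (c₁ / 2) * a ^ (-t₂) :=
          mul_le_mul_of_nonneg_right
            (mul_le_mul_of_nonneg_left hk₀' hMpos.le) hβt
        have hb2 := mul_le_mul_of_nonneg_left hbern hMpos.le
        have h7 : (M * c₁ / 2) * a ^ (-t₂) ≤ (M * c₁ - C₂) * a ^ (-t₂) :=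
          mul_le_mul_of_nonneg_right hMc hβt
        calc φ (k + 1) ≤ M * a ^ (-s) - (M * c₁ - C₂) * a ^ (-t₂) := step1
          _ ≤ M * a ^ (-s) - (M * c₁ / 2) * a ^ (-t₂) := by linarith
          _ ≤ M * a ^ (-s) - M * (s * a ^ (t₁ - 1)) * a ^ (-t₂) := by linarith [hfin]
          _ = M * (a ^ (-s) - s * (a ^ (t₁ - 1) * a ^ (-t₂))) := by ring
          _ ≤ M * (a + 1) ^ (-s) := hb2
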